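/- Limit formula in the counterexample (key computation in the proof of Theorem 4.2): let γ > 1, θ ∈ (0,1], C > 0, δ̂ = C/8, δ = min{C/8, 1}, δ̃ = δ̂ − δ, and ε ∈ (0,δ). Then, in the counterexample data, the limit as p → 0⁺ of 𝓔(U(p,ε)) exists and equals −(θε/8)·[ (8δ̂ − ε) + θε(2δ̃ + δ̂ε)² + 4ε( δ̂ + δδ̃ + δδ̂(1+ε) ) ], and this value is strictly negative. -/

import Mathlib

open Finset

noncomputable section

/-- Internal energy density 𝓔(U) = E − |m|²/(2ρ) − |B|²/2 for U = (ρ,m,B,E) ∈ ℝ⁸. -/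
def mhdE (U : Fin 8 → ℝ) : ℝ :=
  U 7 - (U 1 ^ 2 + U 2 ^ 2 + U 3 ^ 2) / (2 * U 0) - (U 4 ^ 2 + U 5 ^ 2 + U 6 ^ 2) / 2

/-- The admissible state set G = {U : ρ > 0 ∧ 𝓔(U) > 0}. -/
def admG : Set (Fin 8 → ℝ) := {U | 0 < U 0 ∧ 0 < mhdE U}

/-- Velocity components v = m/ρ. -/
def vcomp (U : Fin 8 → ℝ) (i : Fin 3) : ℝ := ![U 1, U 2, U 3] i / U 0

/-- Magnetic field components. -/
def Bcomp (U : Fin 8 → ℝ) (i : Fin 3) : ℝ := ![U 4, U 5, U 6] i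

/-- U · n*(v*,B*) where n*(v*,B*) = (|v*|²/2, −v*, −B*, 1). -/
def dotNstar (vs Bs : Fin 3 → ℝ) (U : Fin 8 → ℝ) : ℝ :=
  U 0 * (vs 0 ^ 2 + vs 1 ^ 2 + vs 2 ^ 2) / 2
    - (U 1 * vs 0 + U 2 * vs 1 + U 3 * vs 2)
    - (U 4 * Bs 0 + U 5 * Bs 1 + U 6 * Bs 2) + U 7

/-- The ideal-MHD flux F_i(U;p). -/
def flux (i : Fin 3) (U : Fin 8 → ℝ) (p : ℝ) : Fin 8 → ℝ :=
  let v : Fin 3 → ℝ := fun j => ![U 1, U 2, U 3] j / U 0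
  let B : Fin 3 → ℝ := ![U 4, U 5, U 6]
  let pt : ℝ := p + (B 0 ^ 2 + B 1 ^ 2 + B 2 ^ 2) / 2
  ![U 0 * v i,
    v i * U 1 - B i * B 0 + (if i = 0 then pt else 0),
    v i * U 2 - B i * B 1 + (if i = 1 then pt else 0),
    v i * U 3 - B i * B 2 + (if i = 2 then pt else 0),
    v i * B 0 - B i * v 0,
    v i * B 1 - B i * v 1,
    v i * B 2 - B i * v 2,
    v i * (U 7 + pt) - B i * (v 0 * B 0 + v 1 * B 1 + v 2 * B 2)]

/-- 𝓒_s = p/(ρ√(2e)) with e = 𝓔(U)/ρ. -/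
def Cs (U : Fin 8 → ℝ) (p : ℝ) : ℝ :=
  p / (U 0 * Real.sqrt (2 * (mhdE U / U 0)))

/-- The speed 𝓒_i(U;p). -/
def Cfast (i : Fin 3) (U : Fin 8 → ℝ) (p : ℝ) : ℝ :=
  (1 / Real.sqrt 2) *
    Real.sqrt ((U 4 ^ 2 + U 5 ^ 2 + U 6 ^ 2) / U 0 + (Cs U p) ^ 2
      + Real.sqrt (((U 4 ^ 2 + U 5 ^ 2 + U 6 ^ 2) / U 0 + (Cs U p) ^ 2) ^ 2
          - 4 * (Bcomp U i) ^ 2 * (Cs U p) ^ 2 / U 0))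

/-- The bound α_i(U,Ũ) of Lemma 2.2. -/
def alphaSpeed (i : Fin 3) (U Ut : Fin 8 → ℝ) (p pt : ℝ) : ℝ :=
  max (max (|vcomp U i| + Cfast i U p) (|vcomp Ut i| + Cfast i Ut pt))
    (|Real.sqrt (U 0) * vcomp U i + Real.sqrt (Ut 0) * vcomp Ut i|
        / (Real.sqrt (U 0) + Real.sqrt (Ut 0))
      + max (Cfast i U p) (Cfast i Ut pt))
  + Real.sqrt ((Bcomp U 0 - Bcomp Ut 0) ^ 2 + (Bcomp U 1 - Bcomp Ut 1) ^ 2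
      + (Bcomp U 2 - Bcomp Ut 2) ^ 2) / (Real.sqrt (U 0) + Real.sqrt (Ut 0))

/-- The Godunov–Powell source vector S(U) = (0, B, v, v·B). -/
def srcS (U : Fin 8 → ℝ) : Fin 8 → ℝ :=
  ![0, U 4, U 5, U 6, U 1 / U 0, U 2 / U 0, U 3 / U 0,
    (U 1 * U 4 + U 2 * U 5 + U 3 * U 6) / U 0]

/-- The state U₀ of the counterexample. -/
def cexU0 (γ δ ε p : ℝ) : Fin 8 → ℝ :=
  ![1, 1 + δ * ε, 0, 0, 1 + ε / 2, 0, 0,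
    (1 + δ * ε) ^ 2 / 2 + (2 + ε) ^ 2 / 8 + p / (γ - 1)]

/-- The state U₁ of the counterexample. -/
def cexU1 (γ p : ℝ) : Fin 8 → ℝ :=
  ![1, 1, 0, 0, 1, 0, 0, 1 + p / (γ - 1)]

/-- The state U₂ of the counterexample. -/
def cexU2 (γ ε p : ℝ) : Fin 8 → ℝ :=
  ![1, 1, 0, 0, 1 + ε, 0, 0, (1 + (1 + ε) ^ 2) / 2 + p / (γ - 1)]

/-- The state U(p,ε) of the counterexample, with ã₁ = 5 and ã₂ = √(γp+4) + 1. -/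
def cexU (γ θ C ε p : ℝ) : Fin 8 → ℝ :=
  (1 - θ) • cexU0 γ (min (C / 8) 1) ε p + (θ / 2) • (cexU1 γ p + cexU2 γ ε p)
    + (θ * C / (5 + (Real.sqrt (γ * p + 4) + 1))) •
        (flux 0 (cexU1 γ p) p - flux 0 (cexU2 γ ε p) p)

lemma vec8_0 (a b c d e f g h : ℝ) : ![a,b,c,d,e,f,g,h] 0 = a := rfl
lemma vec8_1 (a b c d e f g h : ℝ) : ![a,b,c,d,e,f,g,h] 1 = b := rfl
lemma vec8_2 (a b c d e f g h : ℝ) : ![a,b,c,d,e,f,g,h] 2 = c := rfl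
lemma vec8_3 (a b c d e f g h : ℝ) : ![a,b,c,d,e,f,g,h] 3 = d := rfl
lemma vec8_4 (a b c d e f g h : ℝ) : ![a,b,c,d,e,f,g,h] 4 = e := rfl
lemma vec8_5 (a b c d e f g h : ℝ) : ![a,b,c,d,e,f,g,h] 5 = f := rfl
lemma vec8_6 (a b c d e f g h : ℝ) : ![a,b,c,d,e,f,g,h] 6 = g := rfl
lemma vec8_7 (a b c d e f g h : ℝ) : ![a,b,c,d,e,f,g,h] 7 = h := rfl

set_option maxHeartbeats 1000000 in
lemma key (γ θ C ε p : ℝ) :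
    mhdE (cexU γ θ C ε p) =
      (1-θ)*((1+(min (C/8) 1)*ε)^2/2 + (2+ε)^2/8) + (θ/2)*(1+(1+(1+ε)^2)/2) + p/(γ-1)
        - ((1-θ)*(1+(min (C/8) 1)*ε) + θ
            + (θ*C/(5+(Real.sqrt (γ*p+4)+1)))*(ε*(2+ε)/2))^2/2
        - (1+ε/2)^2/2 := by
  simp only [mhdE, cexU, cexU0, cexU1, cexU2, flux, Pi.add_apply, Pi.smul_apply, Pi.sub_apply,
    smul_eq_mul, vec8_0, vec8_1, vec8_2, vec8_3, vec8_4, vec8_5, vec8_6, vec8_7]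
  norm_num [show (0:Fin 3) ≠ 2 from by decide, show ∀ a b c : ℝ, ![a,b,c] 2 = c from fun _ _ _ => rfl]
  ring

/-- Limit formula in the counterexample (key computation in
the proof of Theorem 4.2): as p → 0⁺, 𝓔(U(p,ε)) tends to the stated
strictly negative value. -/
theorem counterexample_limit (γ θ C ε : ℝ) (hγ : 1 < γ)
    (hθ : θ ∈ Set.Ioc (0 : ℝ) 1) (hC : 0 < C)
    (hε : ε ∈ Set.Ioo (0 : ℝ) (min (C / 8) 1)) :
    Filter.Tendsto (fun p => mhdE (cexU γ θ C ε p))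
        (nhdsWithin 0 (Set.Ioi 0))
        (nhds (-(θ * ε / 8) *
          ((8 * (C / 8) - ε)
            + θ * ε * (2 * (C / 8 - min (C / 8) 1) + (C / 8) * ε) ^ 2
            + 4 * ε * (C / 8 + min (C / 8) 1 * (C / 8 - min (C / 8) 1)
                + min (C / 8) 1 * (C / 8) * (1 + ε)))))
    ∧ -(θ * ε / 8) *
          ((8 * (C / 8) - ε)
            + θ * ε * (2 * (C / 8 - min (C / 8) 1) + (C / 8) * ε) ^ 2
            + 4 * ε * (C / 8 + min (C / 8) 1 * (C / 8 - min (C / 8) 1)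
                + min (C / 8) 1 * (C / 8) * (1 + ε))) < 0 := by
  obtain ⟨hθ0, hθ1⟩ := hθ
  obtain ⟨hε0, hεlt⟩ := hε
  have hdle : min (C/8) 1 ≤ C/8 := min_le_left _ _
  have hdpos : 0 < min (C/8) 1 := lt_min (by linarith) one_pos
  have hεC : ε < C/8 := lt_of_lt_of_le hεlt hdle
  constructor
  · have hγ1 : γ - 1 ≠ 0 := by linarith
    set d := min (C/8) 1 with hd
    set f : ℝ → ℝ := fun p =>
      (1-θ)*((1+d*ε)^2/2 + (2+ε)^2/8) + (θ/2)*(1+(1+(1+ε)^2)/2) + p/(γ-1)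
        - ((1-θ)*(1+d*ε) + θ
            + (θ*C/(5+(Real.sqrt (γ*p+4)+1)))*(ε*(2+ε)/2))^2/2
        - (1+ε/2)^2/2 with hf
    have hcont : Continuous f := by
      have hden : ∀ p:ℝ, 5+(Real.sqrt (γ*p+4)+1) ≠ 0 := fun p => by positivity
      have hc : Continuous fun p:ℝ => θ*C/(5+(Real.sqrt (γ*p+4)+1)) :=
        continuous_const.div (by fun_prop) hden
      rw [hf]
      fun_prop
    have ht := (hcont.tendsto 0).mono_left (nhdsWithin_le_nhds (s := Set.Ioi (0:ℝ)))
    rw [show (fun p => mhdE (cexU γ θ C ε p)) = f from funext (key γ θ C ε)]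
    convert ht using 2
    have hs : Real.sqrt (γ*0+4) = 2 := by
      rw [show γ*(0:ℝ)+4 = 2^2 by ring, Real.sqrt_sq (by norm_num)]
    rw [hf]
    simp only [hs]
    have h8 : (5:ℝ)+(2+1) = 8 := by norm_num
    rw [h8]
    field_simp
    ring
  · set d := min (C/8) 1 with hd
    have h1 : 0 < 8*(C/8) - ε := by linarith
    have h2 : 0 ≤ θ * ε * (2*(C/8 - d) + (C/8)*ε)^2 := by positivity
    have h3 : 0 < 4*ε*(C/8 + d*(C/8 - d) + d*(C/8)*(1+ε)) := by
      have ha : 0 ≤ d*(C/8 - d) := mul_nonneg hdpos.le (by linarith)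
      have hb : 0 < d*(C/8)*(1+ε) := by positivity
      have : 0 < C/8 + d*(C/8 - d) + d*(C/8)*(1+ε) := by linarith
      positivity
    have hK : 0 < (8*(C/8) - ε) + θ*ε*(2*(C/8 - d) + (C/8)*ε)^2
        + 4*ε*(C/8 + d*(C/8 - d) + d*(C/8)*(1+ε)) := by linarith
    have hA : 0 < θ*ε/8 := by positivity
    have := mul_pos hA hK
    linarith
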